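/- arXiv:1410.6558 — 2 statements merged into one kernel-verified Lean document; each statement's English description precedes it below -/
import Mathlib

section
/- Let Ω ∈ ℝ^{n×d} be a frame with lower frame bound A > 0, let A_mat ∈ ℝ^{m×n}, k ≥ 1, and let 𝒜 : ℝ^m → ℝ^n be a map such that for every α ∈ ℝ^n and every e ∈ ℝ^m one has ‖α − 𝒜(A_mat α + e)‖₂² ≤ C₁‖e‖₂² + C₂(‖α − [α]_k‖₂² + (1/k)‖α − [α]_k‖₁²), for fixed constants C₁, C₂ ≥ 0. Then for every x ∈ ℝ^d and e ∈ ℝ^m, setting y = A_mat Ω x + e, ŵ = 𝒜(y), and x̂ = Ω† ŵ, one has ‖x − x̂‖₂² ≤ (C₁/A²)‖e‖₂² + (C₂/A²)(‖Ωx − [Ωx]_k‖₂² + (1/k)‖Ωx − [Ωx]_k‖₁²). -/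
open Matrix

/-- The Euclidean (ℓ₂) norm of a finitely-indexed real vector. -/
noncomputable def l2norm {ι : Type*} [Fintype ι] (v : ι → ℝ) : ℝ :=
  Real.sqrt (∑ i, v i ^ 2)

/-- The ℓ₁ norm of a finitely-indexed real vector. -/
def l1norm {ι : Type*} [Fintype ι] (v : ι → ℝ) : ℝ :=
  ∑ i, |v i|

/-- `αk` is a best `k`-term approximation of `α`: it keeps the `k`
largest-magnitude entries of `α` and sets the others to zero. -/
def IsBestKTermApprox {ι : Type*} [Fintype ι] [DecidableEq ι] (k : ℕ)
    (α αk : ι → ℝ) : Prop :=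
  ∃ S : Finset ι, S.card = min k (Fintype.card ι) ∧
    (∀ i, αk i = if i ∈ S then α i else 0) ∧
    ∀ i ∈ S, ∀ j ∉ S, |α j| ≤ |α i|

/-- `P` is the Moore–Penrose pseudo-inverse of `Ω` (the four Penrose conditions). -/
def IsMoorePenroseInv {ι κ : Type*} [Fintype ι] [Fintype κ]
    (Ω : Matrix ι κ ℝ) (P : Matrix κ ι ℝ) : Prop :=
  Ω * P * Ω = Ω ∧ P * Ω * P = P ∧ (Ω * P)ᵀ = Ω * P ∧ (P * Ω)ᵀ = P * Ω

lemma l2norm_sq {ι : Type*} [Fintype ι] (v : ι → ℝ) :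
    l2norm v ^ 2 = ∑ i, v i ^ 2 :=
  Real.sq_sqrt (Finset.sum_nonneg fun i _ => sq_nonneg _)

lemma l2norm_nonneg' {ι : Type*} [Fintype ι] (v : ι → ℝ) : 0 ≤ l2norm v :=
  Real.sqrt_nonneg _

/-- A symmetric idempotent matrix is norm-nonincreasing. -/
lemma proj_l2norm_le {ι : Type*} [Fintype ι] [DecidableEq ι]
    (Q : Matrix ι ι ℝ) (hs : Qᵀ = Q) (hi : Q * Q = Q) (v : ι → ℝ) :
    l2norm (Q.mulVec v) ≤ l2norm v := by
  set u := Q.mulVec v with hu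
  have hQu : Q.mulVec u = u := by
    rw [hu, Matrix.mulVec_mulVec, hi]
  have h1 : ∑ i, u i ^ 2 = ∑ i, u i * v i := by
    calc ∑ i, u i ^ 2 = u ⬝ᵥ u := by simp [dotProduct, sq]
      _ = u ⬝ᵥ Q.mulVec v := by rw [← hu]
      _ = Q.vecMul u ⬝ᵥ v := Matrix.dotProduct_mulVec _ _ _
      _ = u ⬝ᵥ v := by rw [← Matrix.mulVec_transpose, hs, hQu]
      _ = ∑ i, u i * v i := rfl
  have hcs : ∑ i, u i * v i ≤ l2norm u * l2norm v := by
    simpa [l2norm] using Real.sum_mul_le_sqrt_mul_sqrt Finset.univ u v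
  have h2 : l2norm u ^ 2 ≤ l2norm u * l2norm v := by
    rw [l2norm_sq, h1]; exact hcs
  rcases eq_or_lt_of_le (l2norm_nonneg' u) with h0 | h0
  · rw [← h0]; exact l2norm_nonneg' v
  · have := h2
    rw [sq] at this
    exact le_of_mul_le_mul_left (by linarith [this]) h0

/-- Theorem: signal recovery from samples of frames in the
transform domain, adversarial noise case. -/
theorem stmt_0 {n d m : ℕ} (k : ℕ) (hk : 1 ≤ k)
    (Ω : Matrix (Fin n) (Fin d) ℝ) (A : ℝ) (hA : 0 < A)
    (hframe : ∀ x : Fin d → ℝ, A * l2norm x ≤ l2norm (Ω.mulVec x))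
    (Amat : Matrix (Fin m) (Fin n) ℝ)
    (C₁ C₂ : ℝ) (hC₁ : 0 ≤ C₁) (hC₂ : 0 ≤ C₂)
    (Arec : (Fin m → ℝ) → (Fin n → ℝ))
    (hArec : ∀ (α : Fin n → ℝ) (e : Fin m → ℝ) (αk : Fin n → ℝ),
      IsBestKTermApprox k α αk →
      l2norm (α - Arec (Amat.mulVec α + e)) ^ 2 ≤
        C₁ * l2norm e ^ 2 +
          C₂ * (l2norm (α - αk) ^ 2 + (1 / (k : ℝ)) * l1norm (α - αk) ^ 2))
    (P : Matrix (Fin d) (Fin n) ℝ) (hP : IsMoorePenroseInv Ω P)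
    (x : Fin d → ℝ) (e : Fin m → ℝ)
    (y : Fin m → ℝ) (hy : y = Amat.mulVec (Ω.mulVec x) + e)
    (wHat : Fin n → ℝ) (hwHat : wHat = Arec y)
    (xHat : Fin d → ℝ) (hxHat : xHat = P.mulVec wHat)
    (wk : Fin n → ℝ) (hwk : IsBestKTermApprox k (Ω.mulVec x) wk) :
    l2norm (x - xHat) ^ 2 ≤
      (C₁ / A ^ 2) * l2norm e ^ 2 +
        (C₂ / A ^ 2) * (l2norm (Ω.mulVec x - wk) ^ 2 +
          (1 / (k : ℝ)) * l1norm (Ω.mulVec x - wk) ^ 2) := by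
  obtain ⟨hPΩ1, hPΩ2, hPΩ3, hPΩ4⟩ := hP
  set Q := Ω * P with hQ
  have hQs : Qᵀ = Q := hPΩ3
  have hQi : Q * Q = Q := by
    rw [hQ]; rw [show Ω * P * (Ω * P) = Ω * P * Ω * P by rw [Matrix.mul_assoc (Ω*P) Ω P], hPΩ1]
  -- key: Ω (x - xHat) = Q (Ωx - wHat)
  have hkey : Ω.mulVec (x - xHat) = Q.mulVec (Ω.mulVec x - wHat) := by
    rw [hxHat]
    rw [Matrix.mulVec_sub, Matrix.mulVec_sub, Matrix.mulVec_mulVec, Matrix.mulVec_mulVec, hPΩ1]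
  have hrec := hArec (Ω.mulVec x) e wk hwk
  rw [← hy, ← hwHat] at hrec
  have hA2 : (0:ℝ) < A ^ 2 := by positivity
  have hframe2 : A ^ 2 * l2norm (x - xHat) ^ 2 ≤ l2norm (Ω.mulVec (x - xHat)) ^ 2 := by
    have h := hframe (x - xHat)
    have h1 : (A * l2norm (x - xHat)) ^ 2 ≤ l2norm (Ω.mulVec (x - xHat)) ^ 2 := by
      exact pow_le_pow_left₀ (mul_nonneg hA.le (l2norm_nonneg' _)) h 2
    calc A ^ 2 * l2norm (x - xHat) ^ 2 = (A * l2norm (x - xHat)) ^ 2 := by ring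
      _ ≤ _ := h1
  have hproj : l2norm (Ω.mulVec (x - xHat)) ^ 2 ≤ l2norm (Ω.mulVec x - wHat) ^ 2 := by
    rw [hkey]
    apply pow_le_pow_left₀ (l2norm_nonneg' _) (proj_l2norm_le Q hQs hQi _)
  have hchain : A ^ 2 * l2norm (x - xHat) ^ 2 ≤
      C₁ * l2norm e ^ 2 + C₂ * (l2norm (Ω.mulVec x - wk) ^ 2 +
        (1 / (k : ℝ)) * l1norm (Ω.mulVec x - wk) ^ 2) :=
    le_trans (le_trans hframe2 hproj) hrec
  rw [div_mul_eq_mul_div, div_mul_eq_mul_div, ← add_div, le_div_iff₀ hA2]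
  linarith [hchain]
end

section
/- Let L ≥ 1, N ≥ 2, d = N^L, and let Ω_{LD-DIF} be the L-dimensional finite difference operator on (column-stacked) L-dimensional signals of side length N. Let A_mat, B be matrices of appropriate dimensions, k ≥ 1, and C > 0. Suppose B satisfies: for every z ∈ ℝ^d and every ε ≥ 0, ‖Bz‖₂ ≤ ε implies ‖z‖₂ ≤ (C/√k)·log(d)·‖Ω_{LD-DIF} z‖₁ + ε. Suppose 𝒜 satisfies, for every α and every e₁, ‖α − 𝒜(A_mat α + e₁)‖₁ ≤ C₅√k‖e₁‖₂ + C₆‖α − [α]_k‖₁, for fixed constants C₅, C₆ ≥ 0. Let x ∈ ℝ^d, noise vectors e₁, e₂, y₁ = A_mat Ω_{LD-DIF} x + e₁, y₂ = Bx + e₂, ŵ = 𝒜(y₁), and let x̂ be a minimizer of ‖Ω_{LD-DIF} x̃ − ŵ‖₁ over all x̃ satisfying ‖B x̃ − y₂‖₂ ≤ ‖e₂‖₂. Then ‖x̂ − x‖₂ ≤ log(d)·(C₉‖e₁‖₂ + (C₁₀/√k)‖Ω_{LD-DIF} x − [Ω_{LD-DIF} x]_k‖₁) with C₉ = 2C·C₅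 and C₁₀ = 2C·C₆, plus the additional term 2‖e₂‖₂. -/
open Matrix

/-- Index set for the rows of the `L`-dimensional finite difference operator on
signals indexed by `(Fin N)^L`: a direction `ℓ` together with a base point `v`
whose `ℓ`-th coordinate can be incremented. -/
abbrev DifLDIndex (L N : ℕ) : Type :=
  Σ ℓ : Fin L, {v : Fin L → Fin N // (v ℓ).1 + 1 < N}

/-- The `L`-dimensional finite difference operator `Ω_{LD-DIF}`: for each
coordinate direction `ℓ` it collects all first differences of `x` in
direction `ℓ`. -/
def difLD {L N : ℕ} (x : (Fin L → Fin N) → ℝ) : DifLDIndex L N → ℝ :=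
  fun q =>
    x (Function.update q.2.1 q.1 ⟨(q.2.1 q.1).1 + 1, q.2.2⟩) - x q.2.1


lemma l2norm_eq_norm' {ι : Type*} [Fintype ι] (v : ι → ℝ) :
    l2norm v = ‖(EuclideanSpace.equiv ι ℝ).symm v‖ := by
  rw [EuclideanSpace.norm_eq]
  simp [l2norm, sq_abs]

lemma l2norm_neg' {ι : Type*} [Fintype ι] (v : ι → ℝ) : l2norm (-v) = l2norm v := by
  simp [l2norm]

lemma l2norm_add_le' {ι : Type*} [Fintype ι] (u v : ι → ℝ) :
    l2norm (u + v) ≤ l2norm u + l2norm v := by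
  simp only [l2norm_eq_norm', map_add]
  exact norm_add_le _ _

lemma l1norm_nonneg' {ι : Type*} [Fintype ι] (v : ι → ℝ) : 0 ≤ l1norm v :=
  Finset.sum_nonneg fun i _ => abs_nonneg _

lemma l1norm_neg' {ι : Type*} [Fintype ι] (v : ι → ℝ) : l1norm (-v) = l1norm v := by
  simp [l1norm]

lemma l1norm_add_le' {ι : Type*} [Fintype ι] (u v : ι → ℝ) :
    l1norm (u + v) ≤ l1norm u + l1norm v := by
  rw [l1norm, l1norm, l1norm, ← Finset.sum_add_distrib]
  exact Finset.sum_le_sum fun i _ => abs_add_le _ _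

lemma difLD_sub' {L N : ℕ} (u v : (Fin L → Fin N) → ℝ) :
    difLD (u - v) = difLD u - difLD v := by
  funext q
  simp [difLD]
  ring

/-- stable signal recovery from samples of `L`D-DIF in the
transform domain. -/
theorem stmt_4 (L N : ℕ) (hL : 1 ≤ L) (hN : 2 ≤ N) {m₁ m₂ : ℕ}
    (k : ℕ) (hk : 1 ≤ k)
    (Amat : Matrix (Fin m₁) (DifLDIndex L N) ℝ)
    (B : Matrix (Fin m₂) (Fin L → Fin N) ℝ)
    (C : ℝ) (hC : 0 < C)
    (C₅ C₆ : ℝ) (hC₅ : 0 ≤ C₅) (hC₆ : 0 ≤ C₆)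
    (hB : ∀ (z : (Fin L → Fin N) → ℝ) (ε : ℝ), 0 ≤ ε → l2norm (B.mulVec z) ≤ ε →
      l2norm z ≤ (C / Real.sqrt k) * Real.log ((N : ℝ) ^ L) * l1norm (difLD z) + ε)
    (Arec : (Fin m₁ → ℝ) → (DifLDIndex L N → ℝ))
    (hArec : ∀ (α : DifLDIndex L N → ℝ) (e₁ : Fin m₁ → ℝ) (αk : DifLDIndex L N → ℝ),
      IsBestKTermApprox k α αk →
      l1norm (α - Arec (Amat.mulVec α + e₁)) ≤
        C₅ * Real.sqrt k * l2norm e₁ + C₆ * l1norm (α - αk))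
    (x : (Fin L → Fin N) → ℝ) (e₁ : Fin m₁ → ℝ) (e₂ : Fin m₂ → ℝ)
    (y₁ : Fin m₁ → ℝ) (hy₁ : y₁ = Amat.mulVec (difLD x) + e₁)
    (y₂ : Fin m₂ → ℝ) (hy₂ : y₂ = B.mulVec x + e₂)
    (wHat : DifLDIndex L N → ℝ) (hwHat : wHat = Arec y₁)
    (xHat : (Fin L → Fin N) → ℝ)
    (hfeas : l2norm (B.mulVec xHat - y₂) ≤ l2norm e₂)
    (hmin : ∀ xTil : (Fin L → Fin N) → ℝ,
      l2norm (B.mulVec xTil - y₂) ≤ l2norm e₂ →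
      l1norm (difLD xHat - wHat) ≤ l1norm (difLD xTil - wHat))
    (wk : DifLDIndex L N → ℝ) (hwk : IsBestKTermApprox k (difLD x) wk)
    (C₉ C₁₀ : ℝ) (hC₉ : C₉ = 2 * C * C₅) (hC₁₀ : C₁₀ = 2 * C * C₆) :
    l2norm (xHat - x) ≤
      Real.log ((N : ℝ) ^ L) *
        (C₉ * l2norm e₁ + (C₁₀ / Real.sqrt k) * l1norm (difLD x - wk)) +
        2 * l2norm e₂ := by
  
  have hlogd : 0 ≤ Real.log ((N : ℝ) ^ L) := by
    apply Real.log_nonneg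
    have h2 : (2:ℝ) ≤ (N:ℝ) := by exact_mod_cast hN
    calc (1:ℝ) = 1 ^ L := (one_pow L).symm
    _ ≤ (N:ℝ) ^ L := by
        apply pow_le_pow_left₀ (by norm_num) (by linarith)
  have hsk : (0:ℝ) < Real.sqrt k := by
    apply Real.sqrt_pos.2
    exact_mod_cast hk
  -- feasibility of x
  have hxfeas : l2norm (B.mulVec x - y₂) ≤ l2norm e₂ := by
    have : B.mulVec x - y₂ = -e₂ := by rw [hy₂]; abel
    rw [this, l2norm_neg']
  -- ℓ1 error of wHat
  have hrec : l1norm (difLD x - wHat) ≤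
      C₅ * Real.sqrt k * l2norm e₁ + C₆ * l1norm (difLD x - wk) := by
    have := hArec (difLD x) e₁ wk hwk
    rwa [← hy₁, ← hwHat] at this
  -- ℓ1 bound on difLD (xHat - x)
  have hdif : l1norm (difLD (xHat - x)) ≤
      2 * (C₅ * Real.sqrt k * l2norm e₁ + C₆ * l1norm (difLD x - wk)) := by
    have h1 : l1norm (difLD xHat - wHat) ≤ l1norm (difLD x - wHat) := hmin x hxfeas
    have h2 : difLD xHat - difLD x = (difLD xHat - wHat) + -(difLD x - wHat) := by abel
    calc l1norm (difLD (xHat - x)) = l1norm (difLD xHat - difLD x) := by rw [difLD_sub']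
    _ ≤ l1norm (difLD xHat - wHat) + l1norm (-(difLD x - wHat)) := by
        rw [h2]; exact l1norm_add_le' _ _
    _ = l1norm (difLD xHat - wHat) + l1norm (difLD x - wHat) := by rw [l1norm_neg']
    _ ≤ 2 * l1norm (difLD x - wHat) := by linarith
    _ ≤ 2 * (C₅ * Real.sqrt k * l2norm e₁ + C₆ * l1norm (difLD x - wk)) := by linarith
  -- ℓ2 bound on B (xHat - x)
  have hBz : l2norm (B.mulVec (xHat - x)) ≤ 2 * l2norm e₂ := by
    have heq : B.mulVec (xHat - x) = (B.mulVec xHat - y₂) + e₂ := by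
      rw [Matrix.mulVec_sub, hy₂]; abel
    calc l2norm (B.mulVec (xHat - x))
        ≤ l2norm (B.mulVec xHat - y₂) + l2norm e₂ := by rw [heq]; exact l2norm_add_le' _ _
    _ ≤ 2 * l2norm e₂ := by linarith
  have h2e : (0:ℝ) ≤ 2 * l2norm e₂ := by
    have := l2norm_nonneg' e₂; linarith
  have key := hB (xHat - x) (2 * l2norm e₂) h2e hBz
  have hmul : (C / Real.sqrt k) * Real.log ((N : ℝ) ^ L) * l1norm (difLD (xHat - x)) ≤
      Real.log ((N : ℝ) ^ L) *
        (C₉ * l2norm e₁ + (C₁₀ / Real.sqrt k) * l1norm (difLD x - wk)) := by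
    have hcoef : (0:ℝ) ≤ (C / Real.sqrt k) * Real.log ((N : ℝ) ^ L) := by
      apply mul_nonneg (le_of_lt (div_pos hC hsk)) hlogd
    have step : (C / Real.sqrt k) * Real.log ((N : ℝ) ^ L) * l1norm (difLD (xHat - x)) ≤
        (C / Real.sqrt k) * Real.log ((N : ℝ) ^ L) *
          (2 * (C₅ * Real.sqrt k * l2norm e₁ + C₆ * l1norm (difLD x - wk))) :=
      mul_le_mul_of_nonneg_left hdif hcoef
    refine step.trans (le_of_eq ?_)
    rw [hC₉, hC₁₀]
    field_simp
  calc l2norm (xHat - x) ≤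
      (C / Real.sqrt k) * Real.log ((N : ℝ) ^ L) * l1norm (difLD (xHat - x)) +
        2 * l2norm e₂ := key
  _ ≤ Real.log ((N : ℝ) ^ L) *
        (C₉ * l2norm e₁ + (C₁₀ / Real.sqrt k) * l1norm (difLD x - wk)) +
        2 * l2norm e₂ := by linarith
end
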